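/- Let ω > 0 and a < R be real numbers, let E be continuous on [a, R], and let φ be a C² function on [a, R] with φ(R) = 0 satisfying −φ''(x) + ω²·φ(x) = E(x) for all x ∈ [a, R]. Then for every x ∈ [a, R], |φ(x) − φ(a)·sinh(ω·(R − x))/sinh(ω·(R − a))| ≤ ω⁻²·sup_{y ∈ [a, R]} |E(y)|. -/

import Mathlib

open Set Filter Topology

lemma second_deriv_test {u u' : ℝ → ℝ} {c d : ℝ} {s : Set ℝ} (hs : s ∈ 𝓝 c)
    (hd1 : ∀ x ∈ s, HasDerivAt u (u' x) x) (hd2 : HasDerivAt u' d c)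
    (hmax : IsLocalMax u c) : d ≤ 0 := by
  by_contra hpos
  push_neg at hpos
  have hu'c : u' c = 0 := hmax.hasDerivAt_eq_zero (hd1 c (mem_of_mem_nhds hs))
  obtain ⟨t, hts, hto, hct⟩ := mem_nhds_iff.mp hs
  have hslope := hasDerivAt_iff_tendsto_slope.mp hd2
  have hev : ∀ᶠ x in 𝓝[≠] c, 0 < slope u' c x :=
    hslope.eventually (eventually_gt_nhds hpos)
  have hev1 : ∀ᶠ x in 𝓝[>] c, 0 < u' x := by
    have h1 : ∀ᶠ x in 𝓝[>] c, 0 < slope u' c x :=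
      hev.filter_mono (nhdsWithin_mono c (fun x hx => ne_of_gt hx))
    filter_upwards [h1, self_mem_nhdsWithin] with x hx hx'
    have hxc : (0:ℝ) < x - c := sub_pos.mpr hx'
    rw [slope_def_field, hu'c, sub_zero] at hx
    have := mul_pos hx hxc
    rwa [div_mul_cancel₀ _ (ne_of_gt hxc)] at this
  have hev2 : ∀ᶠ x in 𝓝[>] c, u x ≤ u c := hmax.filter_mono nhdsWithin_le_nhds
  have hev3 : ∀ᶠ x in 𝓝[>] c, x ∈ t :=
    mem_nhdsWithin_of_mem_nhds (hto.mem_nhds hct)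
  have hall : {x | 0 < u' x ∧ u x ≤ u c ∧ x ∈ t} ∈ 𝓝[>] c := by
    filter_upwards [hev1, hev2, hev3] with x h1 h2 h3
    exact ⟨h1, h2, h3⟩
  obtain ⟨b, hb, hIoc⟩ := mem_nhdsGT_iff_exists_Ioc_subset.mp hall
  have hsub : Icc c b ⊆ t := by
    intro x hx
    rcases eq_or_lt_of_le hx.1 with h | h
    · rwa [← h]
    · exact (hIoc ⟨h, hx.2⟩).2.2
  have hcont : ContinuousOn u (Icc c b) := fun x hx =>
    ((hd1 x (hts (hsub hx))).continuousAt).continuousWithinAt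
  have hderiv : ∀ x ∈ interior (Icc c b), 0 < deriv u x := by
    rw [interior_Icc]
    intro x hx
    rw [(hd1 x (hts (hsub ⟨hx.1.le, hx.2.le⟩))).deriv]
    exact (hIoc ⟨hx.1, hx.2.le⟩).1
  have hmono := strictMonoOn_of_deriv_pos (convex_Icc c b) hcont hderiv
  have hlt := hmono (left_mem_Icc.mpr (le_of_lt hb)) (right_mem_Icc.mpr (le_of_lt hb)) hb
  exact absurd hlt (not_lt.mpr (hIoc ⟨hb, le_rfl⟩).2.1)

lemma max_principle {a R ω : ℝ} (haR : a < R) (hω : 0 < ω) {u u' u'' : ℝ → ℝ}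
    (hc : ContinuousOn u (Set.Icc a R))
    (hd1 : ∀ x ∈ Set.Ioo a R, HasDerivAt u (u' x) x)
    (hd2 : ∀ x ∈ Set.Ioo a R, HasDerivAt u' (u'' x) x)
    (hineq : ∀ x ∈ Set.Ioo a R, -u'' x + ω ^ 2 * u x ≤ 0)
    (ha : u a ≤ 0) (hR : u R ≤ 0) : ∀ x ∈ Set.Icc a R, u x ≤ 0 := by
  obtain ⟨c, hcmem, hcmax⟩ := isCompact_Icc.exists_isMaxOn
    ⟨a, left_mem_Icc.mpr haR.le⟩ hc
  have key : u c ≤ 0 := by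
    rcases eq_or_lt_of_le hcmem.1 with h1 | h1
    · rwa [← h1]
    rcases eq_or_lt_of_le hcmem.2 with h2 | h2
    · rwa [h2]
    have hIoo : c ∈ Set.Ioo a R := ⟨h1, h2⟩
    have hloc : IsLocalMax u c := hcmax.isLocalMax (Icc_mem_nhds h1 h2)
    have hdd : u'' c ≤ 0 :=
      second_deriv_test (Ioo_mem_nhds h1 h2) hd1 (hd2 c hIoo) hloc
    by_contra hcon
    push_neg at hcon
    nlinarith [hineq c hIoo, mul_pos (mul_pos hω hω) hcon]
  exact fun x hx => le_trans (hcmax hx) key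

/-- **The outer inhomogeneous problem (cf. (3.12)).** If `−φ'' + ω² φ = E` on `[a, R]`
with `φ(R) = 0`, then `φ` deviates from the homogeneous profile
`φ(a) sinh(ω(R−x))/sinh(ω(R−a))` by at most `ω⁻² sup |E|`. -/
theorem outer_inhomogeneous_estimate
    (ω a R : ℝ) (hω : 0 < ω) (haR : a < R)
    (φ E : ℝ → ℝ) (hφ : ContDiffOn ℝ 2 φ (Set.Icc a R))
    (hE : ContinuousOn E (Set.Icc a R))
    (hode : ∀ x ∈ Set.Icc a R,
      -derivWithin (derivWithin φ (Set.Icc a R)) (Set.Icc a R) x + ω ^ 2 * φ x = E x)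
    (hφR : φ R = 0) :
    ∀ x ∈ Set.Icc a R, ∀ M : ℝ, (∀ y ∈ Set.Icc a R, |E y| ≤ M) →
      |φ x - φ a * Real.sinh (ω * (R - x)) / Real.sinh (ω * (R - a))| ≤ ω⁻¹ ^ 2 * M := by
  intro x hx M hM
  have hωR : ω ≠ 0 := ne_of_gt hω
  have hS : 0 < Real.sinh (ω * (R - a)) :=
    Real.sinh_pos_iff.mpr (mul_pos hω (sub_pos.mpr haR))
  set S : ℝ := Real.sinh (ω * (R - a)) with hSdef
  have hM0 : 0 ≤ M := le_trans (abs_nonneg _) (hM a (left_mem_Icc.mpr haR.le))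
  have hUD : UniqueDiffOn ℝ (Set.Icc a R) := uniqueDiffOn_Icc haR
  set φ' : ℝ → ℝ := derivWithin φ (Set.Icc a R) with hφ'def
  set φ'' : ℝ → ℝ := derivWithin φ' (Set.Icc a R) with hφ''def
  have hφ1 : ContDiffOn ℝ 1 φ' (Set.Icc a R) := hφ.derivWithin hUD (by norm_num)
  -- derivatives of φ on the interior
  have hA : ∀ y ∈ Set.Ioo a R, HasDerivAt φ (φ' y) y := by
    intro y hy
    have hmem : Set.Icc a R ∈ 𝓝 y := Icc_mem_nhds hy.1 hy.2
    exact (((hφ.differentiableOn two_ne_zero) y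
      (Ioo_subset_Icc_self hy)).hasDerivWithinAt).hasDerivAt hmem
  have hB : ∀ y ∈ Set.Ioo a R, HasDerivAt φ' (φ'' y) y := by
    intro y hy
    have hmem : Set.Icc a R ∈ 𝓝 y := Icc_mem_nhds hy.1 hy.2
    exact (((hφ1.differentiableOn one_ne_zero) y
      (Ioo_subset_Icc_self hy)).hasDerivWithinAt).hasDerivAt hmem
  -- derivatives of the homogeneous profile
  have hg : ∀ y : ℝ, HasDerivAt (fun z => ω * (R - z)) (-ω) y := by
    intro y
    have := ((hasDerivAt_id y).const_sub R).const_mul ω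
    simpa using this
  have H1 : ∀ y : ℝ, HasDerivAt (fun z => φ a * Real.sinh (ω * (R - z)) / S)
      (φ a * (Real.cosh (ω * (R - y)) * (-ω)) / S) y := by
    intro y
    exact (((Real.hasDerivAt_sinh _).comp y (hg y)).const_mul (φ a)).div_const S
  have H2 : ∀ y : ℝ, HasDerivAt (fun z => φ a * (Real.cosh (ω * (R - z)) * (-ω)) / S)
      (φ a * (Real.sinh (ω * (R - y)) * (-ω) * (-ω)) / S) y := by
    intro y
    exact (((((Real.hasDerivAt_cosh _).comp y (hg y))).mul_const (-ω)).const_mul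
      (φ a)).div_const S
  -- ψ and its derivatives
  set ψ : ℝ → ℝ := fun z => φ z - φ a * Real.sinh (ω * (R - z)) / S with hψdef
  set ψ' : ℝ → ℝ := fun z => φ' z - φ a * (Real.cosh (ω * (R - z)) * (-ω)) / S with hψ'def
  set ψ'' : ℝ → ℝ := fun z => φ'' z - φ a * (Real.sinh (ω * (R - z)) * (-ω) * (-ω)) / S
    with hψ''def
  have hψ1 : ∀ y ∈ Set.Ioo a R, HasDerivAt ψ (ψ' y) y := fun y hy => (hA y hy).sub (H1 y)
  have hψ2 : ∀ y ∈ Set.Ioo a R, HasDerivAt ψ' (ψ'' y) y := fun y hy => (hB y hy).sub (H2 y)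
  have hψode : ∀ y ∈ Set.Ioo a R, -ψ'' y + ω ^ 2 * ψ y = E y := by
    intro y hy
    have h := hode y (Ioo_subset_Icc_self hy)
    simp only [hψdef, hψ''def]
    linear_combination h
  have hψa : ψ a = 0 := by
    simp only [hψdef]
    rw [mul_div_assoc, div_self (ne_of_gt hS)]
    ring
  have hψR : ψ R = 0 := by
    simp only [hψdef, sub_self, mul_zero, Real.sinh_zero, hφR]
    ring
  have hψcont : ContinuousOn ψ (Set.Icc a R) := by
    apply (hφ.continuousOn).sub
    exact Continuous.continuousOn (by fun_prop)
  have hinv : ω ^ 2 * (ω⁻¹ ^ 2 * M) = M := by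
    field_simp
  -- upper bound
  have P1 : ∀ y ∈ Set.Icc a R, ψ y - ω⁻¹ ^ 2 * M ≤ 0 := by
    apply max_principle haR hω (u' := ψ') (u'' := ψ'')
    · exact hψcont.sub continuousOn_const
    · exact fun y hy => (hψ1 y hy).sub_const _
    · exact hψ2
    · intro y hy
      have h := hψode y hy
      have hEy : E y ≤ M := le_trans (le_abs_self _) (hM y (Ioo_subset_Icc_self hy))
      have : -ψ'' y + ω ^ 2 * (ψ y - ω⁻¹ ^ 2 * M) ≤ 0 := by
        rw [mul_sub, hinv]
        linarith
      exact this
    · rw [hψa]; linarith [mul_nonneg (sq_nonneg ω⁻¹) hM0]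
    · rw [hψR]; linarith [mul_nonneg (sq_nonneg ω⁻¹) hM0]
  -- lower bound
  have P2 : ∀ y ∈ Set.Icc a R, -ψ y - ω⁻¹ ^ 2 * M ≤ 0 := by
    apply max_principle haR hω (u' := fun z => -ψ' z) (u'' := fun z => -ψ'' z)
    · exact (hψcont.neg).sub continuousOn_const
    · exact fun y hy => ((hψ1 y hy).neg).sub_const _
    · exact fun y hy => (hψ2 y hy).neg
    · intro y hy
      have h := hψode y hy
      have hEy : -E y ≤ M := le_trans (neg_le_abs _) (hM y (Ioo_subset_Icc_self hy))
      have : -(-ψ'' y) + ω ^ 2 * (-ψ y - ω⁻¹ ^ 2 * M) ≤ 0 := by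
        rw [mul_sub, hinv, mul_neg]
        linarith
      exact this
    · rw [hψa]; linarith [mul_nonneg (sq_nonneg ω⁻¹) hM0]
    · rw [hψR]; linarith [mul_nonneg (sq_nonneg ω⁻¹) hM0]
  have h1 := P1 x hx
  have h2 := P2 x hx
  rw [abs_le]
  constructor <;> [linarith [h2]; linarith [h1]]
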